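/- The group G = ℤ/pℤ ⊕ ℤ (p prime) contains infinitely many distinct maximal infinite cyclic subgroups; explicitly, the subgroups C(i, p^r) generated by (i, p^r) for i ∈ ℤ/pℤ \ {0} and r ≥ 0 are pairwise distinct and each is maximal among infinite cyclic subgroups of G. -/

import Mathlib

/-- A maximal infinite cyclic subgroup of an additive group. -/
def IsMaxInfCyclic {G : Type*} [AddGroup G] (C : AddSubgroup G) : Prop :=
  (∃ g, C = AddSubgroup.zmultiples g) ∧ (C : Set G).Infinite ∧
    ∀ D : AddSubgroup G, (∃ g, D = AddSubgroup.zmultiples g) →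
      (D : Set G).Infinite → C ≤ D → C = D

lemma aux_inf {p : ℕ} (i : ZMod p) (m : ℤ) (hm : m ≠ 0) :
    ((AddSubgroup.zmultiples ((i, m) : ZMod p × ℤ) : Set (ZMod p × ℤ))).Infinite := by
  apply Set.infinite_of_injective_forall_mem
    (f := fun n : ℤ => n • ((i, m) : ZMod p × ℤ))
  · intro a b hab
    have h2 : a • m = b • m := congrArg Prod.snd hab
    have : a * m = b * m := by simpa [smul_eq_mul] using h2
    exact mul_right_cancel₀ hm this
  · intro n
    exact AddSubgroup.zsmul_mem _ (AddSubgroup.mem_zmultiples _) n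

lemma aux_max {p : ℕ} (hp : p.Prime) (i : ZMod p) (hi : i ≠ 0) (r : ℕ)
    (g : ZMod p × ℤ)
    (hmem : ((i, (p : ℤ) ^ r) : ZMod p × ℤ) ∈ AddSubgroup.zmultiples g) :
    g ∈ AddSubgroup.zmultiples ((i, (p : ℤ) ^ r) : ZMod p × ℤ) := by
  obtain ⟨n, hn⟩ := AddSubgroup.mem_zmultiples_iff.mp hmem
  have h2 : n * g.2 = (p : ℤ) ^ r := by
    have := congrArg Prod.snd hn
    simpa [smul_eq_mul] using this
  have hdvd : n ∣ (p : ℤ) ^ r := ⟨g.2, h2.symm⟩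
  have hnat : n.natAbs ∣ p ^ r := by
    have h := Int.natAbs_dvd_natAbs.mpr hdvd
    simpa [Int.natAbs_pow] using h
  obtain ⟨k, hk, hkeq⟩ := (Nat.dvd_prime_pow hp).mp hnat
  have hk0 : k = 0 := by
    by_contra hk0
    have hpn : p ∣ n.natAbs := hkeq ▸ dvd_pow_self p hk0
    have hpd : (p : ℤ) ∣ n := Int.natCast_dvd_natCast.mpr hpn |>.trans (Int.natAbs_dvd.mpr dvd_rfl)
    have h1 : n • g.1 = i := congrArg Prod.fst hn
    have hcast : (n : ZMod p) = 0 := (ZMod.intCast_zmod_eq_zero_iff_dvd n p).mpr hpd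
    apply hi
    rw [← h1, zsmul_eq_mul, hcast, zero_mul]
  have hn1 : n = 1 ∨ n = -1 := by
    have : n.natAbs = 1 := by simpa [hk0] using hkeq
    rcases Int.natAbs_eq n with h | h
    · left; omega
    · right; omega
  have hnn : n * n = 1 := by rcases hn1 with h | h <;> simp [h]
  refine AddSubgroup.mem_zmultiples_iff.mpr ⟨n, ?_⟩
  calc n • ((i, (p : ℤ) ^ r) : ZMod p × ℤ) = n • n • g := by rw [hn]
    _ = (n * n) • g := (mul_zsmul g n n).symm
    _ = g := by rw [hnn, one_zsmul]

/-- In `G = ℤ/pℤ × ℤ` the subgroups `C(i, p^r)` for `i ≠ 0`,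
`r ≥ 0` are pairwise distinct maximal infinite cyclic subgroups; in particular
`G` has infinitely many maximal infinite cyclic subgroups. -/
theorem stmt2 (p : ℕ) (hp : p.Prime) :
    (Function.Injective fun x : {i : ZMod p // i ≠ 0} × ℕ =>
        AddSubgroup.zmultiples ((x.1.1, (p : ℤ) ^ x.2) : ZMod p × ℤ)) ∧
    (∀ i : ZMod p, i ≠ 0 → ∀ r : ℕ,
        IsMaxInfCyclic (AddSubgroup.zmultiples ((i, (p : ℤ) ^ r) : ZMod p × ℤ))) ∧
    {C : AddSubgroup (ZMod p × ℤ) | IsMaxInfCyclic C}.Infinite := by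
  haveI : Fact p.Prime := ⟨hp⟩
  have hppos : (0 : ℤ) < (p : ℤ) := by exact_mod_cast hp.pos
  have hinj : Function.Injective fun x : {i : ZMod p // i ≠ 0} × ℕ =>
      AddSubgroup.zmultiples ((x.1.1, (p : ℤ) ^ x.2) : ZMod p × ℤ) := by
    rintro ⟨⟨i, hi⟩, r⟩ ⟨⟨j, hj⟩, s⟩ h
    simp only at h
    have hm1 : ((i, (p : ℤ) ^ r) : ZMod p × ℤ) ∈
        AddSubgroup.zmultiples ((j, (p : ℤ) ^ s) : ZMod p × ℤ) := by
      rw [← h]; exact AddSubgroup.mem_zmultiples _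
    have hm2 : ((j, (p : ℤ) ^ s) : ZMod p × ℤ) ∈
        AddSubgroup.zmultiples ((i, (p : ℤ) ^ r) : ZMod p × ℤ) := by
      rw [h]; exact AddSubgroup.mem_zmultiples _
    obtain ⟨n, hn⟩ := AddSubgroup.mem_zmultiples_iff.mp hm1
    obtain ⟨m, hm⟩ := AddSubgroup.mem_zmultiples_iff.mp hm2
    have hn2 : n * (p : ℤ) ^ s = (p : ℤ) ^ r := by
      have := congrArg Prod.snd hn; simpa [smul_eq_mul] using this
    have hm2' : m * (p : ℤ) ^ r = (p : ℤ) ^ s := by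
      have := congrArg Prod.snd hm; simpa [smul_eq_mul] using this
    have hnm : n * m = 1 := by
      have hpr : ((p : ℤ) ^ r) ≠ 0 := by positivity
      have : (n * m) * (p : ℤ) ^ r = 1 * (p : ℤ) ^ r := by
        rw [one_mul, mul_assoc, hm2', hn2]
      exact mul_right_cancel₀ hpr this
    have hn1 : n = 1 := by
      rcases Int.isUnit_iff.mp (IsUnit.of_mul_eq_one (a := n) m hnm) with h1 | h1
      · exact h1
      · exfalso
        have : -((p:ℤ) ^ s) = (p:ℤ) ^ r := by rw [← hn2, h1]; ring
        have hps : (0:ℤ) < (p:ℤ) ^ s := by positivity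
        have hpr : (0:ℤ) < (p:ℤ) ^ r := by positivity
        omega
    subst hn1
    have hrs : r = s := by
      have : (p : ℤ) ^ s = (p : ℤ) ^ r := by simpa using hn2
      have hnat : p ^ s = p ^ r := by exact_mod_cast this
      exact (Nat.pow_right_injective hp.two_le hnat).symm
    have hij : i = j := by
      have := congrArg Prod.fst hn
      simpa using this.symm
    subst hrs; subst hij; rfl
  refine ⟨hinj, ?_, ?_⟩
  · intro i hi r
    refine ⟨⟨_, rfl⟩, aux_inf i ((p:ℤ)^r) (by positivity), ?_⟩
    rintro D ⟨g, rfl⟩ hDinf hle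
    have hmem : ((i, (p : ℤ) ^ r) : ZMod p × ℤ) ∈ AddSubgroup.zmultiples g :=
      hle (AddSubgroup.mem_zmultiples _)
    have hg : g ∈ AddSubgroup.zmultiples ((i, (p : ℤ) ^ r) : ZMod p × ℤ) :=
      aux_max hp i hi r g hmem
    refine le_antisymm hle ?_
    intro x hx
    obtain ⟨k, hk⟩ := AddSubgroup.mem_zmultiples_iff.mp hx
    exact hk ▸ AddSubgroup.zsmul_mem _ hg k
  · haveI : Nonempty {i : ZMod p // i ≠ 0} := ⟨⟨1, one_ne_zero⟩⟩
    apply Set.infinite_of_injective_forall_mem (f := fun x : {i : ZMod p // i ≠ 0} × ℕ =>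
        AddSubgroup.zmultiples ((x.1.1, (p : ℤ) ^ x.2) : ZMod p × ℤ)) hinj
    rintro ⟨⟨i, hi⟩, r⟩
    refine ⟨⟨_, rfl⟩, aux_inf i ((p:ℤ)^r) (by positivity), ?_⟩
    rintro D ⟨g, rfl⟩ hDinf hle
    have hmem : ((i, (p : ℤ) ^ r) : ZMod p × ℤ) ∈ AddSubgroup.zmultiples g :=
      hle (AddSubgroup.mem_zmultiples _)
    have hg : g ∈ AddSubgroup.zmultiples ((i, (p : ℤ) ^ r) : ZMod p × ℤ) :=
      aux_max hp i hi r g hmem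
    refine le_antisymm hle ?_
    intro x hx
    obtain ⟨k, hk⟩ := AddSubgroup.mem_zmultiples_iff.mp hx
    exact hk ▸ AddSubgroup.zsmul_mem _ hg k
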